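/- Assume the intensity measure density is log-normal: p(a) = (√(2πσ²)·a)^{-1}·exp(-(log a - μ)²/(2σ²)) on (0,∞), with parameters μ ∈ ℝ, σ > 0. Let J(θ) be the Jeffreys prior of the log-normal (probit) fragility model, J(θ)² = |A_{01,02}·A_{21,22} − A_{11,12}²| / (α²β⁶), where for k = 0,1,2, A_{k1,k2}(α,β) = ∫_0^∞ log^k(a/α)·Φ'(γ(a))²/[Φ(γ(a))(1-Φ(γ(a)))]·p(a) da, γ(a) = (log a - log α)/β, Φ'(x) = (2π)^{-1/2}exp(-x²/2). Then for each fixed α > 0 there exists a constant D'(α) > 0 such that J((α,β)) ~ D'(α)/β as β → 0. -/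

import Mathlib

open MeasureTheory Real Filter Set

/-- The standard Gaussian cumulative distribution function. -/
noncomputable def Phi (x : ℝ) : ℝ :=
  (Real.sqrt (2 * Real.pi))⁻¹ * ∫ t in Set.Iic x, Real.exp (-t ^ 2 / 2)

/-- The standard Gaussian density `Φ'(x) = (2π)^{-1/2} exp(-x²/2)`. -/
noncomputable def Phi' (x : ℝ) : ℝ :=
  (Real.sqrt (2 * Real.pi))⁻¹ * Real.exp (-x ^ 2 / 2)

/-- The log-normal intensity measure density
`p(a) = (√(2πσ²)·a)⁻¹ exp(-(log a - μ)²/(2σ²))`. -/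
noncomputable def pLN (μ σ a : ℝ) : ℝ :=
  (Real.sqrt (2 * Real.pi * σ ^ 2) * a)⁻¹ * Real.exp (-(Real.log a - μ) ^ 2 / (2 * σ ^ 2))

/-- `A_{k1,k2}(α,β) = ∫₀^∞ log^k(a/α)·Φ'(γ(a))²/[Φ(γ(a))(1-Φ(γ(a)))]·p(a) da`
with `γ(a) = (log a - log α)/β`. -/
noncomputable def A (μ σ : ℝ) (k : ℕ) (α β : ℝ) : ℝ :=
  ∫ a in Set.Ioi (0 : ℝ),
    Real.log (a / α) ^ k *
      (Phi' ((Real.log a - Real.log α) / β) ^ 2 /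
        (Phi ((Real.log a - Real.log α) / β) *
          (1 - Phi ((Real.log a - Real.log α) / β)))) * pLN μ σ a

/-- The Jeffreys prior, `J(θ) = √(|A₀₁,₀₂·A₂₁,₂₂ − A₁₁,₁₂²| / (α²β⁶))`. -/
noncomputable def Jeff (μ σ α β : ℝ) : ℝ :=
  Real.sqrt (|A μ σ 0 α β * A μ σ 2 α β - A μ σ 1 α β ^ 2| / (α ^ 2 * β ^ 6))

noncomputable def w (x : ℝ) : ℝ := Phi' x ^ 2 / (Phi x * (1 - Phi x))

lemma sqrt2pi_pos : 0 < Real.sqrt (2 * π) := Real.sqrt_pos.2 (by positivity)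

lemma Phi'_pos (x : ℝ) : 0 < Phi' x := by
  unfold Phi'; positivity

lemma gauss_eq : (fun t : ℝ => Real.exp (-t ^ 2 / 2)) = fun t : ℝ => Real.exp (-(2⁻¹ : ℝ) * t ^ 2) := by
  funext t; congr 1; ring

lemma integrable_gauss : Integrable (fun t : ℝ => Real.exp (-t ^ 2 / 2)) := by
  rw [gauss_eq]; exact integrable_exp_neg_mul_sq (by norm_num)

lemma integral_gauss : ∫ t : ℝ, Real.exp (-t ^ 2 / 2) = Real.sqrt (2 * π) := by
  rw [gauss_eq, integral_gaussian]
  congr 1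
  field_simp

lemma setIntegral_gauss_pos {s : Set ℝ} (hvs : volume s ≠ 0) :
    0 < ∫ t in s, Real.exp (-t ^ 2 / 2) := by
  rw [setIntegral_pos_iff_support_of_nonneg_ae
      (ae_of_all _ fun t => (exp_pos _).le) integrable_gauss.integrableOn]
  have hsupp : Function.support (fun t : ℝ => Real.exp (-t ^ 2 / 2)) = univ := by
    ext t; simp [exp_ne_zero]
  rw [hsupp, univ_inter]
  exact pos_iff_ne_zero.mpr hvs

lemma Phi_pos (x : ℝ) : 0 < Phi x :=
  mul_pos (inv_pos.2 sqrt2pi_pos) (setIntegral_gauss_pos (by simp [Real.volume_Iic]))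

lemma Iic_add_Ioi_gauss (x : ℝ) :
    (∫ t in Iic x, Real.exp (-t ^ 2 / 2)) + (∫ t in Ioi x, Real.exp (-t ^ 2 / 2))
      = Real.sqrt (2 * π) := by
  rw [← integral_gauss]
  exact intervalIntegral.integral_Iic_add_Ioi integrable_gauss.integrableOn integrable_gauss.integrableOn

lemma one_sub_Phi (x : ℝ) :
    1 - Phi x = (Real.sqrt (2 * π))⁻¹ * ∫ t in Ioi x, Real.exp (-t ^ 2 / 2) := by
  have h1 : (Real.sqrt (2 * π))⁻¹ * Real.sqrt (2 * π) = 1 := inv_mul_cancel₀ sqrt2pi_pos.ne'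
  have h := congrArg (fun y => (Real.sqrt (2 * π))⁻¹ * y) (Iic_add_Ioi_gauss x)
  simp only [mul_add, h1] at h
  unfold Phi
  linarith

lemma Phi_lt_one (x : ℝ) : Phi x < 1 := by
  have h2 : 0 < ∫ t in Ioi x, Real.exp (-t ^ 2 / 2) :=
    setIntegral_gauss_pos (by simp [Real.volume_Ioi])
  have := one_sub_Phi x
  nlinarith [inv_pos.2 sqrt2pi_pos]

lemma Phi_mono : Monotone Phi := by
  intro x y h
  refine mul_le_mul_of_nonneg_left ?_ (inv_nonneg.2 sqrt2pi_pos.le)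
  exact setIntegral_mono_set integrable_gauss.integrableOn
    (ae_of_all _ fun t => (exp_pos _).le) (HasSubset.Subset.eventuallyLE (Iic_subset_Iic.2 h))

lemma measurable_Phi : Measurable Phi := Phi_mono.measurable

lemma Phi_neg (x : ℝ) : Phi (-x) = 1 - Phi x := by
  have key : (∫ t in Iic (-x), Real.exp (-t ^ 2 / 2)) = ∫ t in Ioi x, Real.exp (-t ^ 2 / 2) := by
    have h := integral_comp_neg_Iic (-x) (fun t => Real.exp (-t ^ 2 / 2))
    simpa [neg_sq] using h
  have lhs : Phi (-x) = (Real.sqrt (2 * π))⁻¹ * ∫ t in Iic (-x), Real.exp (-t ^ 2 / 2) := rfl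
  rw [lhs, key, ← one_sub_Phi]

lemma Phi_zero : Phi 0 = 1 / 2 := by
  have := Phi_neg 0; rw [neg_zero] at this; linarith

lemma Phi_half {x : ℝ} (hx : 0 ≤ x) : 1 / 2 ≤ Phi x := Phi_zero ▸ Phi_mono hx

lemma tail_lower {x : ℝ} (hx : 0 ≤ x) : Phi' (x + 1) ≤ 1 - Phi x := by
  rw [one_sub_Phi]
  unfold Phi'
  refine mul_le_mul_of_nonneg_left ?_ (inv_nonneg.2 sqrt2pi_pos.le)
  have hvol : volume (Ioc x (x + 1)) = 1 := by
    rw [Real.volume_Ioc]; norm_num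
  have key : Real.exp (-(x + 1) ^ 2 / 2) * (volume (Ioc x (x + 1))).toReal
      ≤ ∫ t in Ioc x (x + 1), Real.exp (-t ^ 2 / 2) := by
    refine setIntegral_ge_of_const_le_real measurableSet_Ioc (by rw [hvol]; exact ENNReal.one_ne_top) ?_
      integrable_gauss.integrableOn
    intro t ht
    have h1 : 0 < t := lt_of_le_of_lt hx ht.1
    have h2 : t ≤ x + 1 := ht.2
    have h3 : t ^ 2 ≤ (x + 1) ^ 2 := by nlinarith
    exact exp_le_exp.2 (by linarith)
  rw [hvol] at key
  simp only [ENNReal.toReal_one, mul_one] at key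
  refine key.trans ?_
  exact setIntegral_mono_set integrable_gauss.integrableOn
    (ae_of_all _ fun t => (exp_pos _).le)
    (HasSubset.Subset.eventuallyLE Ioc_subset_Ioi_self)

lemma w_pos (x : ℝ) : 0 < w x :=
  div_pos (pow_pos (Phi'_pos x) 2) (mul_pos (Phi_pos x) (sub_pos.2 (Phi_lt_one x)))

lemma Phi'_even (x : ℝ) : Phi' (-x) = Phi' x := by unfold Phi'; rw [neg_sq]

lemma w_even (x : ℝ) : w (-x) = w x := by
  unfold w; rw [Phi'_even, Phi_neg]; ring_nf

lemma measurable_Phi' : Measurable Phi' := by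
  unfold Phi'; fun_prop

lemma measurable_w : Measurable w :=
  (measurable_Phi'.pow_const 2).div ((measurable_Phi).mul (measurable_const.sub measurable_Phi))

lemma w_bound_right {x : ℝ} (hx : 0 ≤ x) : w x ≤ 2 * Phi' x ^ 2 / Phi' (x + 1) := by
  unfold w
  have hden : (1 / 2 : ℝ) * Phi' (x + 1) ≤ Phi x * (1 - Phi x) :=
    mul_le_mul (Phi_half hx) (tail_lower hx) (Phi'_pos _).le (Phi_pos x).le
  have h1 : Phi' x ^ 2 / (Phi x * (1 - Phi x)) ≤ Phi' x ^ 2 / ((1 / 2) * Phi' (x + 1)) := by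
    exact div_le_div_of_nonneg_left (sq_nonneg _)
      (mul_pos one_half_pos (Phi'_pos (x + 1))) hden
  refine h1.trans_eq ?_
  rw [eq_div_iff (Phi'_pos (x + 1)).ne']
  field_simp
  rw [mul_div_assoc, div_self (Phi'_pos _).ne', mul_one]

noncomputable def C0 : ℝ := 2 * (Real.sqrt (2 * π))⁻¹ * Real.exp (3 / 2)

lemma w_le_main {x : ℝ} (hx : 0 ≤ x) : w x ≤ C0 * Real.exp (-(4⁻¹ : ℝ) * x ^ 2) := by
  refine (w_bound_right hx).trans ?_
  rw [div_le_iff₀ (Phi'_pos (x + 1))]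
  unfold Phi' C0
  have hexp : Real.exp (-x ^ 2 / 2) ^ 2 = Real.exp (-x ^ 2) := by
    rw [sq, ← Real.exp_add]; congr 1; ring
  rw [mul_pow, hexp]
  have key : Real.exp (-x ^ 2) ≤
      Real.exp (3 / 2) * Real.exp (-(4⁻¹ : ℝ) * x ^ 2) * Real.exp (-(x + 1) ^ 2 / 2) := by
    rw [← Real.exp_add, ← Real.exp_add]
    apply Real.exp_le_exp.2
    nlinarith [sq_nonneg (x - 2)]
  calc 2 * ((Real.sqrt (2 * π))⁻¹ ^ 2 * Real.exp (-x ^ 2))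
      ≤ 2 * ((Real.sqrt (2 * π))⁻¹ ^ 2 *
        (Real.exp (3 / 2) * Real.exp (-(4⁻¹ : ℝ) * x ^ 2) * Real.exp (-(x + 1) ^ 2 / 2))) := by
        have h2 : (0:ℝ) ≤ (Real.sqrt (2 * π))⁻¹ ^ 2 := sq_nonneg _
        nlinarith [key, h2]
    _ = 2 * (Real.sqrt (2 * π))⁻¹ * Real.exp (3 / 2) * Real.exp (-(4⁻¹ : ℝ) * x ^ 2) *
        ((Real.sqrt (2 * π))⁻¹ * Real.exp (-(x + 1) ^ 2 / 2)) := by ring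

lemma w_le (x : ℝ) : w x ≤ C0 * Real.exp (-(4⁻¹ : ℝ) * x ^ 2) := by
  rcases le_or_gt 0 x with hx | hx
  · exact w_le_main hx
  · have := w_le_main (x := -x) (by linarith)
    rwa [w_even, neg_sq] at this

lemma C0_pos : 0 < C0 := by unfold C0; positivity

lemma integrable_pow_gauss (k : ℕ) :
    Integrable (fun x : ℝ => |x| ^ k * Real.exp (-(4⁻¹ : ℝ) * x ^ 2)) := by
  have hk : (-1 : ℝ) < (k : ℝ) := lt_of_lt_of_le neg_one_lt_zero (Nat.cast_nonneg k)
  have h := (integrable_rpow_mul_exp_neg_mul_sq (by norm_num : (0:ℝ) < 4⁻¹) hk).abs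
  simp only [Real.rpow_natCast] at h
  refine h.congr (ae_of_all _ fun x => ?_)
  simp only [abs_mul, abs_pow, abs_of_pos (exp_pos _)]

/-- The shifted log-normal density in the log variable. -/
noncomputable def qd (μ σ α t : ℝ) : ℝ :=
  (Real.sqrt (2 * π * σ ^ 2))⁻¹ * Real.exp (-(t + Real.log α - μ) ^ 2 / (2 * σ ^ 2))

lemma qd_pos {μ σ α : ℝ} (hσ : 0 < σ) (t : ℝ) : 0 < qd μ σ α t := by
  unfold qd; positivity

lemma qd_le {μ σ α : ℝ} (t : ℝ) : qd μ σ α t ≤ (Real.sqrt (2 * π * σ ^ 2))⁻¹ := by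
  unfold qd
  have h1 : Real.exp (-(t + Real.log α - μ) ^ 2 / (2 * σ ^ 2)) ≤ 1 := by
    rcases eq_or_ne σ 0 with h | h
    · simp [h]
    · apply Real.exp_le_one_iff.2
      have : (0:ℝ) < 2 * σ ^ 2 := by positivity
      apply div_nonpos_of_nonpos_of_nonneg (by nlinarith [sq_nonneg (t + Real.log α - μ)]) this.le
  have h2 : (0:ℝ) ≤ (Real.sqrt (2 * π * σ ^ 2))⁻¹ := by positivity
  calc (Real.sqrt (2 * π * σ ^ 2))⁻¹ * Real.exp (-(t + Real.log α - μ) ^ 2 / (2 * σ ^ 2))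
      ≤ (Real.sqrt (2 * π * σ ^ 2))⁻¹ * 1 := by nlinarith
    _ = _ := mul_one _

lemma qd_continuous (μ σ α : ℝ) : Continuous (qd μ σ α) := by
  unfold qd; fun_prop

/-- the rescaled integrals -/
noncomputable def II (μ σ α : ℝ) (k : ℕ) (β : ℝ) : ℝ :=
  ∫ x : ℝ, x ^ k * w x * qd μ σ α (β * x)

lemma A_eq {μ σ α β : ℝ} (hα : 0 < α) (hβ : 0 < β) (k : ℕ) :
    A μ σ k α β = β ^ (k + 1) * II μ σ α k β := by
  have himg : Set.Ioi (0:ℝ) = Real.exp '' univ := by rw [image_univ, Real.range_exp]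
  unfold A
  rw [himg, integral_image_eq_integral_abs_deriv_smul MeasurableSet.univ
      (fun x _ => (Real.hasDerivAt_exp x).hasDerivWithinAt) Real.exp_injective.injOn,
      setIntegral_univ]
  have hstep1 : (fun t : ℝ => |Real.exp t| •
      (Real.log (Real.exp t / α) ^ k *
        (Phi' ((Real.log (Real.exp t) - Real.log α) / β) ^ 2 /
          (Phi ((Real.log (Real.exp t) - Real.log α) / β) *
            (1 - Phi ((Real.log (Real.exp t) - Real.log α) / β)))) * pLN μ σ (Real.exp t)))
      = fun t : ℝ => (t - Real.log α) ^ k * w ((t - Real.log α) / β) *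
          ((Real.sqrt (2 * π * σ ^ 2))⁻¹ * Real.exp (-(t - μ) ^ 2 / (2 * σ ^ 2))) := by
    funext t
    rw [smul_eq_mul, abs_of_pos (exp_pos t), Real.log_div (Real.exp_ne_zero t) hα.ne',
      Real.log_exp]
    have wdef : ∀ y : ℝ, Phi' y ^ 2 / (Phi y * (1 - Phi y)) = w y := fun y => rfl
    rw [wdef]
    unfold pLN
    rw [Real.log_exp]
    have hkey : Real.exp t * ((t - Real.log α) ^ k * w ((t - Real.log α) / β) *
        ((Real.sqrt (2 * π * σ ^ 2) * Real.exp t)⁻¹ * Real.exp (-(t - μ) ^ 2 / (2 * σ ^ 2))))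
        = (Real.exp t * (Real.exp t)⁻¹) * ((t - Real.log α) ^ k * w ((t - Real.log α) / β) *
        ((Real.sqrt (2 * π * σ ^ 2))⁻¹ * Real.exp (-(t - μ) ^ 2 / (2 * σ ^ 2)))) := by
      rw [mul_inv]; ring
    rw [hkey, mul_inv_cancel₀ (Real.exp_ne_zero t), one_mul]
  rw [hstep1]
  set H : ℝ → ℝ := fun t => (t - Real.log α) ^ k * w ((t - Real.log α) / β) *
      ((Real.sqrt (2 * π * σ ^ 2))⁻¹ * Real.exp (-(t - μ) ^ 2 / (2 * σ ^ 2))) with hH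
  have h2 : ∫ x : ℝ, H (β * x + Real.log α) = |β⁻¹| • ∫ t : ℝ, H t := by
    calc ∫ x : ℝ, H (β * x + Real.log α)
        = ∫ x : ℝ, (fun y => H (y + Real.log α)) (β * x) := rfl
      _ = |β⁻¹| • ∫ y : ℝ, H (y + Real.log α) := Measure.integral_comp_mul_left (fun y => H (y + Real.log α)) β
      _ = |β⁻¹| • ∫ t : ℝ, H t := by rw [integral_add_right_eq_self]
  have h3 : ∫ t : ℝ, H t = β * ∫ x : ℝ, H (β * x + Real.log α) := by
    rw [h2, abs_of_pos (inv_pos.2 hβ), smul_eq_mul, ← mul_assoc,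
      mul_inv_cancel₀ hβ.ne', one_mul]
  rw [h3]
  have h4 : (fun x : ℝ => H (β * x + Real.log α))
      = fun x : ℝ => β ^ k * (x ^ k * w x * qd μ σ α (β * x)) := by
    funext x
    rw [hH]
    simp only [add_sub_cancel_right]
    rw [mul_div_cancel_left₀ _ hβ.ne', mul_pow]
    unfold qd
    ring
  rw [h4, integral_const_mul]
  unfold II
  ring

lemma II_tendsto {μ σ α : ℝ} (hσ : 0 < σ) (k : ℕ) :
    Tendsto (II μ σ α k) (nhdsWithin 0 (Set.Ioi 0))
      (nhds (∫ x : ℝ, x ^ k * w x * qd μ σ α 0)) := by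
  have hq0 : (0:ℝ) < Real.sqrt (2 * π * σ ^ 2) := by positivity
  refine tendsto_integral_filter_of_dominated_convergence
    (fun x : ℝ => (Real.sqrt (2 * π * σ ^ 2))⁻¹ * (C0 * (|x| ^ k * Real.exp (-(4⁻¹:ℝ) * x ^ 2))))
    ?_ ?_ ?_ ?_
  · filter_upwards with β
    exact (((measurable_id.pow_const k).mul measurable_w).mul
      ((qd_continuous μ σ α).measurable.comp (measurable_id.const_mul β))).aestronglyMeasurable
  · filter_upwards with β
    filter_upwards with x
    rw [Real.norm_eq_abs, abs_mul, abs_mul, abs_of_pos (w_pos x), abs_of_pos (qd_pos hσ _),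
      abs_pow]
    calc |x| ^ k * w x * qd μ σ α (β * x)
        ≤ |x| ^ k * (C0 * Real.exp (-(4⁻¹:ℝ) * x ^ 2)) * (Real.sqrt (2 * π * σ ^ 2))⁻¹ := by
          apply mul_le_mul
          · exact mul_le_mul_of_nonneg_left (w_le x) (pow_nonneg (abs_nonneg x) k)
          · exact qd_le _
          · exact (qd_pos hσ _).le
          · exact mul_nonneg (pow_nonneg (abs_nonneg x) k)
              (mul_nonneg C0_pos.le (exp_pos _).le)
      _ = (Real.sqrt (2 * π * σ ^ 2))⁻¹ * (C0 * (|x| ^ k * Real.exp (-(4⁻¹:ℝ) * x ^ 2))) := by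
          ring
  · exact (((integrable_pow_gauss k).const_mul C0).const_mul _)
  · filter_upwards with x
    have h1 : Tendsto (fun β : ℝ => β * x) (nhdsWithin 0 (Set.Ioi 0)) (nhds (0 * x)) :=
      ((continuous_mul_right x).tendsto 0).mono_left nhdsWithin_le_nhds
    rw [zero_mul] at h1
    exact (((qd_continuous μ σ α).tendsto 0).comp h1).const_mul _

lemma integrable_pow_w (k : ℕ) : Integrable (fun x : ℝ => x ^ k * w x) := by
  refine Integrable.mono' ((integrable_pow_gauss k).const_mul C0)
    (((measurable_id.pow_const k).mul measurable_w).aestronglyMeasurable)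
    (ae_of_all _ fun x => ?_)
  rw [Real.norm_eq_abs, abs_mul, abs_of_pos (w_pos x), abs_pow]
  calc |x| ^ k * w x ≤ |x| ^ k * (C0 * Real.exp (-(4⁻¹:ℝ) * x ^ 2)) :=
        mul_le_mul_of_nonneg_left (w_le x) (pow_nonneg (abs_nonneg x) k)
    _ = C0 * (|x| ^ k * Real.exp (-(4⁻¹:ℝ) * x ^ 2)) := by ring

lemma c_even_pos {k : ℕ} (hk : Even k) : 0 < ∫ x : ℝ, x ^ k * w x := by
  rw [integral_pos_iff_support_of_nonneg_ae
      (ae_of_all _ fun x => mul_nonneg (hk.pow_nonneg x) (w_pos x).le)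
      (integrable_pow_w k)]
  refine lt_of_lt_of_le ?_ (measure_mono (fun x (hx : x ∈ Set.Ioi (0:ℝ)) => ?_))
  · simp [Real.volume_Ioi]
  · have hx0 : (0:ℝ) < x := hx
    simp only [Function.mem_support]
    exact (mul_pos (pow_pos hx0 k) (w_pos x)).ne'

lemma c1_zero : ∫ x : ℝ, x ^ 1 * w x = 0 := by
  have h := integral_neg_eq_self (fun x : ℝ => x ^ 1 * w x) (volume : Measure ℝ)
  simp only [pow_one, w_even, neg_mul] at h
  rw [integral_neg] at h
  simp only [pow_one]
  linarith

theorem stmt9' (μ σ : ℝ) (hσ : 0 < σ) (α : ℝ) (hα : 0 < α) :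
    ∃ D' > (0 : ℝ), Filter.Tendsto (fun β : ℝ =>
      Real.sqrt (|A μ σ 0 α β * A μ σ 2 α β - A μ σ 1 α β ^ 2| / (α ^ 2 * β ^ 6)) / (D' / β))
      (nhdsWithin 0 (Set.Ioi 0)) (nhds 1) := by
  set q0 : ℝ := qd μ σ α 0 with hq0def
  have hq0 : 0 < q0 := qd_pos hσ 0
  set L0 : ℝ := ∫ x : ℝ, x ^ 0 * w x * q0 with hL0def
  set L1 : ℝ := ∫ x : ℝ, x ^ 1 * w x * q0 with hL1def
  set L2 : ℝ := ∫ x : ℝ, x ^ 2 * w x * q0 with hL2def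
  have hL0 : 0 < L0 := by
    rw [hL0def, integral_mul_const]
    exact mul_pos (c_even_pos (Even.zero)) hq0
  have hL2 : 0 < L2 := by
    rw [hL2def, integral_mul_const]
    exact mul_pos (c_even_pos (by decide : Even 2)) hq0
  have hL1 : L1 = 0 := by
    rw [hL1def, integral_mul_const, c1_zero, zero_mul]
  have hLL : 0 < L0 * L2 := mul_pos hL0 hL2
  refine ⟨Real.sqrt (L0 * L2) / α, div_pos (Real.sqrt_pos.2 hLL) hα, ?_⟩
  -- limit of the bracket
  have hI0 := II_tendsto (μ := μ) (α := α) hσ 0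
  have hI1 := II_tendsto (μ := μ) (α := α) hσ 1
  have hI2 := II_tendsto (μ := μ) (α := α) hσ 2
  have hE : Tendsto (fun β : ℝ => |II μ σ α 0 β * II μ σ α 2 β - II μ σ α 1 β ^ 2|)
      (nhdsWithin 0 (Set.Ioi 0)) (nhds (L0 * L2)) := by
    have h := ((hI0.mul hI2).sub (hI1.pow 2)).abs
    rw [← hL0def, ← hL1def, ← hL2def, hL1] at h
    simpa [abs_of_pos hLL] using h
  have hfinal : Tendsto (fun β : ℝ =>
      Real.sqrt (|II μ σ α 0 β * II μ σ α 2 β - II μ σ α 1 β ^ 2|) / Real.sqrt (L0 * L2))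
      (nhdsWithin 0 (Set.Ioi 0)) (nhds 1) := by
    have h := (hE.sqrt).div_const (Real.sqrt (L0 * L2))
    rwa [div_self (Real.sqrt_pos.2 hLL).ne'] at h
  refine hfinal.congr' ?_
  filter_upwards [self_mem_nhdsWithin] with β (hβ : 0 < β)
  -- algebraic identification for fixed β > 0
  rw [A_eq hα hβ 0, A_eq hα hβ 1, A_eq hα hβ 2]
  have hnum : β ^ (0+1) * II μ σ α 0 β * (β ^ (2+1) * II μ σ α 2 β) -
      (β ^ (1+1) * II μ σ α 1 β) ^ 2
      = β ^ 4 * (II μ σ α 0 β * II μ σ α 2 β - II μ σ α 1 β ^ 2) := by ring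
  rw [hnum, abs_mul, abs_of_pos (by positivity : (0:ℝ) < β ^ 4)]
  have hden : β ^ 4 * |II μ σ α 0 β * II μ σ α 2 β - II μ σ α 1 β ^ 2| / (α ^ 2 * β ^ 6)
      = |II μ σ α 0 β * II μ σ α 2 β - II μ σ α 1 β ^ 2| / (α * β) ^ 2 := by
    field_simp
  rw [hden, Real.sqrt_div (abs_nonneg _), Real.sqrt_sq (by positivity : (0:ℝ) ≤ α * β)]
  rw [div_div]
  congr 1
  field_simp

/-- For the log-normal IM density and each fixed `α > 0`, there is `D'(α) > 0` such
that `J((α,β)) ~ D'(α)/β` as `β → 0⁺`. -/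
theorem stmt9 (μ σ : ℝ) (hσ : 0 < σ) (α : ℝ) (hα : 0 < α) :
    ∃ D' > (0 : ℝ), Filter.Tendsto (fun β : ℝ => Jeff μ σ α β / (D' / β))
      (nhdsWithin 0 (Set.Ioi 0)) (nhds 1) := by
  obtain ⟨D', h1, h2⟩ := stmt9' μ σ hσ α hα
  exact ⟨D', h1, by simpa only [Jeff] using h2⟩
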